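/- Let n ≥ 3 be an integer, let (ξ, η) ∈ ℝ × ℝ^{n-1} with (ξ, η) ≠ (0, 0), and let ε > 0. Let a ∈ ℝ, u ∈ ℝ^{n-1}, w ∈ ℝ^{n-1}, and let A be a real (n−1)×(n−1) matrix. Assume: (i) a + trace(A) = 0; (ii) ξ·a + ⟨η, u⟩ = 0 and ξ·w + A·η = 0; (iii) for every S ∈ ℝ with |S| < ε and every Y ∈ ℝ^{n-1} with |Y| = 1 and ξ·S + ⟨η, Y⟩ = 0, both S·a + ⟨Y, u⟩ − S²·⟨Y, w⟩ − S·⟨Y, A·Y⟩ = 0 and −S²·a·Y − S·(⟨Y, u⟩ + ⟨Y, w⟩)·Y + S·w + A·Y + (S² − 1)·⟨Y, A·Y⟩·Y = 0. Then a = 0, u = 0, w = 0, and A = 0. -/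

import Mathlib

open scoped RealInnerProductSpace

/-- Action of a matrix on a Euclidean vector: `(mulE A Y) i = ∑ j, A i j * Y j`. -/
noncomputable def mulE {m : ℕ} (A : Matrix (Fin m) (Fin m) ℝ)
    (Y : EuclideanSpace ℝ (Fin m)) : EuclideanSpace ℝ (Fin m) :=
  WithLp.toLp 2 (fun i => ∑ j, A i j * Y j)

section helpers

variable {m : ℕ} (A : Matrix (Fin m) (Fin m) ℝ)

lemma mulE_apply' (x : EuclideanSpace ℝ (Fin m)) (i : Fin m) :
    mulE A x i = ∑ j, A i j * x j := rfl

lemma mulE_add' (x y : EuclideanSpace ℝ (Fin m)) :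
    mulE A (x + y) = mulE A x + mulE A y := by
  ext i
  simp [mulE_apply', mul_add, Finset.sum_add_distrib]

lemma mulE_smul' (c : ℝ) (x : EuclideanSpace ℝ (Fin m)) :
    mulE A (c • x) = c • mulE A x := by
  ext i
  simp only [mulE_apply', PiLp.smul_apply, smul_eq_mul, Finset.mul_sum]
  exact Finset.sum_congr rfl fun j _ => by ring

lemma mulE_zero' : mulE A (0 : EuclideanSpace ℝ (Fin m)) = 0 := by
  ext i
  simp [mulE_apply']

lemma mulE_single' (j : Fin m) (i : Fin m) :
    mulE A (EuclideanSpace.single j (1:ℝ)) i = A i j := by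
  simp [mulE_apply', EuclideanSpace.single_apply]

/-- cancel a nonzero scalar factor -/
lemma cancel₀ {x y : ℝ} (hx : x ≠ 0) (h : x * y = 0) : y = 0 := by
  rcases mul_eq_zero.mp h with h' | h'
  · exact absurd h' hx
  · exact h'

/-- existence of a unit vector orthogonal to a given vector in dim ≥ 2 -/
lemma exists_unit_orth (hm : 2 ≤ m) (η : EuclideanSpace ℝ (Fin m)) :
    ∃ Y : EuclideanSpace ℝ (Fin m), ‖Y‖ = 1 ∧ ⟪η, Y⟫ = 0 := by
  have hfr : Module.finrank ℝ (EuclideanSpace ℝ (Fin m)) = m := by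
    simp [finrank_euclideanSpace_fin]
  have hK : (ℝ ∙ η)ᗮ ≠ ⊥ := by
    intro hbot
    have h1 : (ℝ ∙ η) = ⊤ := by
      rw [← Submodule.orthogonal_eq_bot_iff]
      exact hbot
    have h2 : Module.finrank ℝ (ℝ ∙ η) ≤ 1 := by
      rcases eq_or_ne η 0 with h0 | h0
      · rw [h0]
        rw [Submodule.span_zero_singleton]
        simp
      · rw [finrank_span_singleton h0]
    rw [h1] at h2
    rw [finrank_top, hfr] at h2
    omega
  obtain ⟨y, hy, hy0⟩ := Submodule.exists_mem_ne_zero_of_ne_bot hK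
  refine ⟨‖y‖⁻¹ • y, norm_smul_inv_norm hy0, ?_⟩
  rw [real_inner_smul_right]
  have := (Submodule.mem_orthogonal _ y).mp hy η (Submodule.mem_span_singleton_self η)
  rw [this]; ring

/-- norm of a combination of an orthonormal pair -/
lemma norm_combo {e Y0 : EuclideanSpace ℝ (Fin m)} (he : ‖e‖ = 1) (hY : ‖Y0‖ = 1)
    (ho : ⟪e, Y0⟫ = 0) (s c : ℝ) (hsc : s^2 + c^2 = 1) : ‖s • e + c • Y0‖ = 1 := by
  have hee : ⟪e, e⟫ = 1 := by rw [real_inner_self_eq_norm_mul_norm, he]; ring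
  have hYY : ⟪Y0, Y0⟫ = 1 := by rw [real_inner_self_eq_norm_mul_norm, hY]; ring
  have hoY : ⟪Y0, e⟫ = 0 := by rw [real_inner_comm]; exact ho
  have h1 : ⟪s • e + c • Y0, s • e + c • Y0⟫ = 1 := by
    simp only [inner_add_left, inner_add_right, real_inner_smul_left, real_inner_smul_right,
      hee, hYY, ho, hoY]
    nlinarith [hsc]
  have h2 := real_inner_self_eq_norm_mul_norm (s • e + c • Y0)
  nlinarith [norm_nonneg (s • e + c • Y0), h1, h2]

/-- scaling: inner vanishing on unit orthogonal vectors extends to all orthogonal vectors -/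
lemma perp_scale {η v : EuclideanSpace ℝ (Fin m)}
    (h : ∀ Y : EuclideanSpace ℝ (Fin m), ‖Y‖ = 1 → ⟪η, Y⟫ = 0 → ⟪Y, v⟫ = 0)
    (z : EuclideanSpace ℝ (Fin m)) (hz : ⟪η, z⟫ = 0) : ⟪z, v⟫ = 0 := by
  rcases eq_or_ne z 0 with rfl | hz0
  · simp
  · have h1 := h (‖z‖⁻¹ • z) (norm_smul_inv_norm hz0) (by rw [real_inner_smul_right, hz]; ring)
    rw [real_inner_smul_left] at h1
    rcases mul_eq_zero.mp h1 with h' | h'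
    · exact absurd h' (inv_ne_zero (norm_ne_zero_iff.mpr hz0))
    · exact h'

/-- scaling for the matrix action -/
lemma mulE_scale {η : EuclideanSpace ℝ (Fin m)} {b : ℝ}
    (h : ∀ Y : EuclideanSpace ℝ (Fin m), ‖Y‖ = 1 → ⟪η, Y⟫ = 0 → mulE A Y = b • Y)
    (z : EuclideanSpace ℝ (Fin m)) (hz : ⟪η, z⟫ = 0) : mulE A z = b • z := by
  rcases eq_or_ne z 0 with rfl | hz0
  · simp [mulE_zero']
  · have h1 := h (‖z‖⁻¹ • z) (norm_smul_inv_norm hz0) (by rw [real_inner_smul_right, hz]; ring)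
    rw [mulE_smul'] at h1
    have h2 := congrArg (fun v => (‖z‖ : ℝ) • v) h1
    simp only [smul_smul] at h2
    have hnz : ‖z‖ * ‖z‖⁻¹ = 1 := mul_inv_cancel₀ (norm_ne_zero_iff.mpr hz0)
    rw [hnz, one_smul] at h2
    rw [h2, show ‖z‖ * (b * ‖z‖⁻¹) = b by rw [mul_comm b, ← mul_assoc, hnz, one_mul]]

end helpers

-- Case η = 0 as its own lemma
lemma case_eta_zero (n : ℕ) (hn : 3 ≤ n)
    (ξ : ℝ) (hξ : ξ ≠ 0)
    (ε : ℝ) (hε : 0 < ε)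
    (a : ℝ) (u w : EuclideanSpace ℝ (Fin (n - 1)))
    (A : Matrix (Fin (n - 1)) (Fin (n - 1)) ℝ)
    (htrace : a + A.trace = 0)
    (hgauge1 : ξ * a + ⟪(0 : EuclideanSpace ℝ (Fin (n-1))), u⟫ = 0)
    (hgauge2 : ξ • w + mulE A (0 : EuclideanSpace ℝ (Fin (n-1))) = 0)
    (h : ∀ S : ℝ, |S| < ε → ∀ Y : EuclideanSpace ℝ (Fin (n - 1)), ‖Y‖ = 1 →
      ξ * S + ⟪(0 : EuclideanSpace ℝ (Fin (n-1))), Y⟫ = 0 →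
      S * a + ⟪Y, u⟫ - S ^ 2 * ⟪Y, w⟫ - S * ⟪Y, mulE A Y⟫ = 0 ∧
      (-(S ^ 2 * a)) • Y - (S * (⟪Y, u⟫ + ⟪Y, w⟫)) • Y + S • w + mulE A Y
        + ((S ^ 2 - 1) * ⟪Y, mulE A Y⟫) • Y = 0) :
    a = 0 ∧ u = 0 ∧ w = 0 ∧ A = 0 := by
  have hm : 2 ≤ n - 1 := by omega
  -- base instantiation at S = 0
  have h0 : ∀ Y : EuclideanSpace ℝ (Fin (n-1)), ‖Y‖ = 1 →
      ⟪Y, u⟫ = 0 ∧ mulE A Y = ⟪Y, mulE A Y⟫ • Y := by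
    intro Y hY
    obtain ⟨h1, h2⟩ := h 0 (by simpa using hε) Y hY (by simp)
    constructor
    · simpa using h1
    · have h2' : mulE A Y - ⟪Y, mulE A Y⟫ • Y = 0 := by
        simp only [ne_eq, OfNat.ofNat_ne_zero, not_false_eq_true, zero_pow, zero_mul, neg_zero,
          zero_smul, zero_sub, zero_smul, smul_zero, zero_add] at h2
        linear_combination (norm := module) h2
      linear_combination (norm := module) h2'
  -- u = 0
  have hu : u = 0 := by
    rcases eq_or_ne u 0 with h' | h'
    · exact h'
    · have := (h0 (‖u‖⁻¹ • u) (norm_smul_inv_norm h')).1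
      rw [real_inner_smul_left, real_inner_self_eq_norm_mul_norm] at this
      have hne : ‖u‖ ≠ 0 := norm_ne_zero_iff.mpr h'
      exfalso
      apply h'
      rw [← norm_eq_zero]
      rcases mul_eq_zero.mp this with h'' | h''
      · exact absurd h'' (inv_ne_zero hne)
      · rcases mul_eq_zero.mp h'' with h3 | h3 <;> exact h3
  -- every vector is an eigenvector
  have heig : ∀ x : EuclideanSpace ℝ (Fin (n-1)), ∃ μ : ℝ, mulE A x = μ • x := by
    intro x
    rcases eq_or_ne x 0 with rfl | hx
    · exact ⟨0, by simp [mulE_zero']⟩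
    · have h2 := (h0 (‖x‖⁻¹ • x) (norm_smul_inv_norm hx)).2
      rw [mulE_smul'] at h2
      have h3 := congrArg (fun v => (‖x‖ : ℝ) • v) h2
      simp only [smul_smul] at h3
      have hnz : ‖x‖ * ‖x‖⁻¹ = 1 := mul_inv_cancel₀ (norm_ne_zero_iff.mpr hx)
      rw [hnz, one_smul] at h3
      exact ⟨_, h3⟩
  -- A is scalar
  classical
  set i0 : Fin (n-1) := ⟨0, by omega⟩
  set i1 : Fin (n-1) := ⟨1, by omega⟩
  have hi01 : i0 ≠ i1 := by
    simp only [i0, i1, ne_eq, Fin.mk.injEq]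
    omega
  -- entries of A
  have hent : ∀ i j : Fin (n-1), i ≠ j → A j i = 0 ∧ A i i = A j j := by
    intro i j hij
    obtain ⟨μi, hμi⟩ := heig (EuclideanSpace.single i 1)
    obtain ⟨μj, hμj⟩ := heig (EuclideanSpace.single j 1)
    obtain ⟨μ, hμ⟩ := heig (EuclideanSpace.single i 1 + EuclideanSpace.single j 1)
    rw [mulE_add', hμi, hμj] at hμ
    -- evaluate coordinates
    have hii := congrFun (congrArg WithLp.ofLp hμi) i
    have hji := congrFun (congrArg WithLp.ofLp hμi) j
    have evi := congrFun (congrArg WithLp.ofLp hμ) i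
    have evj := congrFun (congrArg WithLp.ofLp hμ) j
    simp only [mulE_single', PiLp.smul_apply, PiLp.add_apply, smul_eq_mul,
      EuclideanSpace.single_apply] at hii hji evi evj
    have hjj := congrFun (congrArg WithLp.ofLp hμj) j
    simp only [mulE_single', PiLp.smul_apply, PiLp.add_apply, smul_eq_mul,
      EuclideanSpace.single_apply] at hjj
    simp only [if_pos rfl, if_neg hij, if_neg (Ne.symm hij), if_true, mul_one, mul_zero, add_zero,
      zero_add, mul_add] at hii hji evi evj hjj
    exact ⟨hji, by rw [hii, hjj, evi, evj]⟩
  -- a = 0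
  have ha : a = 0 := by
    have : ξ * a = 0 := by simpa using hgauge1
    exact (mul_eq_zero.mp this).resolve_left hξ
  -- diagonal constant
  have hdiag : ∀ i : Fin (n-1), A i i = A i0 i0 := by
    intro i
    rcases eq_or_ne i i0 with rfl | hne
    · rfl
    · exact (hent i i0 hne).2.symm ▸ (hent i i0 hne).2
  -- trace
  have htr : A.trace = (n-1 : ℕ) * A i0 i0 := by
    have : A.trace = ∑ i : Fin (n-1), A i i := rfl
    rw [this]
    rw [Finset.sum_congr rfl (fun i _ => hdiag i)]
    simp [Finset.sum_const, mul_comm]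
  have hA00 : A i0 i0 = 0 := by
    rw [ha, zero_add, htr] at htrace
    have hmne : ((n-1 : ℕ) : ℝ) ≠ 0 := by
      have : (0:ℝ) < ((n-1 : ℕ) : ℝ) := by
        exact_mod_cast Nat.pos_of_ne_zero (by omega)
      linarith
    exact (mul_eq_zero.mp htrace).resolve_left hmne
  have hA : A = 0 := by
    ext i j
    rcases eq_or_ne i j with rfl | hne
    · rw [hdiag i, hA00]; rfl
    · exact ((hent j i hne.symm).1).trans rfl
  have hw : w = 0 := by
    have : ξ • w = 0 := by
      have := hgauge2
      rw [mulE_zero', add_zero] at this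
      exact this
    rcases smul_eq_zero.mp this with h' | h'
    · exact absurd h' hξ
    · exact h'
  exact ⟨ha, hu, hw, hA⟩

lemma case_xi_zero (n : ℕ) (hn : 3 ≤ n)
    (η : EuclideanSpace ℝ (Fin (n - 1))) (hη : η ≠ 0)
    (ε : ℝ) (hε : 0 < ε)
    (a : ℝ) (u w : EuclideanSpace ℝ (Fin (n - 1)))
    (A : Matrix (Fin (n - 1)) (Fin (n - 1)) ℝ)
    (htrace : a + A.trace = 0)
    (hgauge1 : ⟪η, u⟫ = 0)
    (hgauge2 : mulE A η = 0)
    (h : ∀ S : ℝ, |S| < ε → ∀ Y : EuclideanSpace ℝ (Fin (n - 1)), ‖Y‖ = 1 →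
      ⟪η, Y⟫ = 0 →
      S * a + ⟪Y, u⟫ - S ^ 2 * ⟪Y, w⟫ - S * ⟪Y, mulE A Y⟫ = 0 ∧
      (-(S ^ 2 * a)) • Y - (S * (⟪Y, u⟫ + ⟪Y, w⟫)) • Y + S • w + mulE A Y
        + ((S ^ 2 - 1) * ⟪Y, mulE A Y⟫) • Y = 0) :
    a = 0 ∧ u = 0 ∧ w = 0 ∧ A = 0 := by
  have hm : 2 ≤ n - 1 := by omega
  set r : ℝ := ‖η‖ with hr_def
  have hr : 0 < r := norm_pos_iff.mpr hη
  set e : EuclideanSpace ℝ (Fin (n-1)) := r⁻¹ • η with he_def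
  have he : ‖e‖ = 1 := norm_smul_inv_norm hη
  have hee : ⟪e, e⟫ = 1 := by rw [real_inner_self_eq_norm_mul_norm, he]; ring
  have hηe : η = r • e := by
    rw [he_def, smul_smul, mul_inv_cancel₀ (ne_of_gt hr), one_smul]
  have hinner_e : ∀ x : EuclideanSpace ℝ (Fin (n-1)), ⟪e, x⟫ = r⁻¹ * ⟪η, x⟫ := by
    intro x
    rw [he_def, real_inner_smul_left]
  set δ : ℝ := ε/2 with hδ_def
  have hδ : 0 < δ := by positivity
  have hδε : |δ| < ε := by rw [abs_of_pos hδ]; linarith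
  have hδε' : |(-δ)| < ε := by rw [abs_neg, abs_of_pos hδ]; linarith
  have h0ε : |(0:ℝ)| < ε := by simpa using hε
  -- key facts for unit vectors orthogonal to η
  have key : ∀ Y : EuclideanSpace ℝ (Fin (n-1)), ‖Y‖ = 1 → ⟪η, Y⟫ = 0 →
      ⟪Y, u⟫ = 0 ∧ ⟪Y, w⟫ = 0 ∧ ⟪Y, mulE A Y⟫ = a ∧ mulE A Y = a • Y := by
    intro Y hY hYo
    obtain ⟨q0, p0⟩ := h 0 h0ε Y hY hYo
    obtain ⟨q1, _⟩ := h δ hδε Y hY hYo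
    obtain ⟨q2, _⟩ := h (-δ) hδε' Y hY hYo
    have hu0 : ⟪Y, u⟫ = 0 := by simpa using q0
    have hTY : mulE A Y = ⟪Y, mulE A Y⟫ • Y := by
      have p0' : mulE A Y - ⟪Y, mulE A Y⟫ • Y = 0 := by
        simp only [ne_eq, OfNat.ofNat_ne_zero, not_false_eq_true, zero_pow, zero_mul, neg_zero,
          zero_smul, zero_sub, smul_zero, zero_add] at p0
        linear_combination (norm := module) p0
      linear_combination (norm := module) p0'
    have hw0 : ⟪Y, w⟫ = 0 := by
      have h2 : 2*δ^2*⟪Y, w⟫ = 0 := by linear_combination -q1 - q2 + 2*hu0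
      have hne : 2*δ^2 ≠ (0:ℝ) := by positivity
      exact (mul_eq_zero.mp h2).resolve_left hne
    have hla : ⟪Y, mulE A Y⟫ = a := by
      have h2 : 2*δ*(a - ⟪Y, mulE A Y⟫) = 0 := by linear_combination q1 - q2
      have hne : 2*δ ≠ (0:ℝ) := by positivity
      have := (mul_eq_zero.mp h2).resolve_left hne
      linarith
    exact ⟨hu0, hw0, hla, by rw [hTY, hla]⟩
  -- w = 0
  obtain ⟨Y0, hY0n, hY0o⟩ := exists_unit_orth hm η
  obtain ⟨hu0, hw0, hla, hTY0⟩ := key Y0 hY0n hY0o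
  have hw : w = 0 := by
    obtain ⟨_, p1⟩ := h δ hδε Y0 hY0n hY0o
    rw [hu0, hw0, hTY0, real_inner_smul_right] at p1
    have hY0Y0 : ⟪Y0, Y0⟫ = 1 := by rw [real_inner_self_eq_norm_mul_norm, hY0n]; ring
    rw [hY0Y0] at p1
    have hδw : δ • w = 0 := by
      linear_combination (norm := module) p1
    rcases smul_eq_zero.mp hδw with h' | h'
    · exact absurd h' (ne_of_gt hδ)
    · exact h'
  have hηe' : ⟪η, e⟫ = r := by
    rw [he_def, real_inner_smul_right, real_inner_self_eq_norm_mul_norm, ← hr_def]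
    field_simp
  have hz_any : ∀ x : EuclideanSpace ℝ (Fin (n-1)), ⟪η, x - ⟪e, x⟫ • e⟫ = 0 := by
    intro x
    rw [inner_sub_right, real_inner_smul_right, hηe', hinner_e]
    field_simp
    ring
  -- u = 0
  have hu : u = 0 := by
    have hev : ∀ x : EuclideanSpace ℝ (Fin (n-1)), ⟪x, u⟫ = 0 := by
      intro x
      have h1 : ⟪x - ⟪e, x⟫ • e, u⟫ = 0 :=
        perp_scale (fun Y hY hYo => (key Y hY hYo).1) _ (hz_any x)
      have h2 : ⟪e, u⟫ = 0 := by rw [hinner_e, hgauge1]; ring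
      have h3 : ⟪x, u⟫ = ⟪x - ⟪e, x⟫ • e, u⟫ + ⟪e, x⟫ * ⟪e, u⟫ := by
        rw [inner_sub_left, real_inner_smul_left]; ring
      rw [h3, h1, h2]; ring
    have := hev u
    exact inner_self_eq_zero.mp this
  -- structure of A
  have hTe : mulE A e = 0 := by
    rw [he_def, mulE_smul', hgauge2, smul_zero]
  have hTx : ∀ x : EuclideanSpace ℝ (Fin (n-1)),
      mulE A x = a • x - (a * ⟪e, x⟫) • e := by
    intro x
    have h1 : mulE A (x - ⟪e, x⟫ • e) = a • (x - ⟪e, x⟫ • e) :=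
      mulE_scale A (fun Y hY hYo => (key Y hY hYo).2.2.2) _ (hz_any x)
    calc mulE A x = mulE A (⟪e, x⟫ • e) + mulE A (x - ⟪e, x⟫ • e) := by
          rw [← mulE_add']
          exact congrArg (mulE A) (by module)
      _ = ⟪e, x⟫ • mulE A e + a • (x - ⟪e, x⟫ • e) := by rw [mulE_smul', h1]
      _ = a • x - (a * ⟪e, x⟫) • e := by rw [hTe]; module
  -- trace computation
  have hdiag : ∀ i : Fin (n-1), A i i = a - a * (e i * e i) := by
    intro i
    have h1 := congrFun (congrArg WithLp.ofLp (hTx (EuclideanSpace.single i 1))) i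
    have h2 : ⟪e, EuclideanSpace.single i (1:ℝ)⟫ = e i := by
      simp [EuclideanSpace.inner_single_right]
    rw [h2] at h1
    simp only [mulE_single', PiLp.sub_apply, PiLp.smul_apply, smul_eq_mul,
      EuclideanSpace.single_apply, if_pos rfl, if_true, mul_one] at h1
    rw [h1]; ring
  have hsum : ∑ i, (e i * e i) = 1 := by
    have : ⟪e, e⟫ = ∑ i, e i * e i := by
      rw [PiLp.inner_apply]; simp [mul_comm, sq]
    rw [← this, hee]
  have htr : A.trace = (n-1 : ℕ) * a - a := by
    have h1 : A.trace = ∑ i : Fin (n-1), A i i := rfl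
    rw [h1, Finset.sum_congr rfl (fun i _ => hdiag i), Finset.sum_sub_distrib,
      Finset.sum_const, ← Finset.mul_sum, hsum]
    simp [mul_comm]
  have ha : a = 0 := by
    rw [htr] at htrace
    have h1 : ((n-1:ℕ):ℝ) * a = 0 := by linarith
    have hmne : ((n-1 : ℕ) : ℝ) ≠ 0 := by
      have : (0:ℝ) < ((n-1 : ℕ) : ℝ) := by exact_mod_cast Nat.pos_of_ne_zero (by omega)
      linarith
    exact (mul_eq_zero.mp h1).resolve_left hmne
  have hA : A = 0 := by
    ext i j
    have h1 := congrFun (congrArg WithLp.ofLp (hTx (EuclideanSpace.single j 1))) i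
    rw [ha] at h1
    simp only [mulE_single', zero_smul, zero_mul, sub_zero, PiLp.zero_apply] at h1
    simpa using h1
  exact ⟨ha, hu, hw, hA⟩

set_option maxHeartbeats 1000000 in
lemma case_both (n : ℕ) (hn : 3 ≤ n)
    (ξ : ℝ) (hξ : ξ ≠ 0)
    (η : EuclideanSpace ℝ (Fin (n - 1))) (hη : η ≠ 0)
    (ε : ℝ) (hε : 0 < ε)
    (a : ℝ) (u w : EuclideanSpace ℝ (Fin (n - 1)))
    (A : Matrix (Fin (n - 1)) (Fin (n - 1)) ℝ)
    (hgauge1 : ξ * a + ⟪η, u⟫ = 0)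
    (hgauge2 : ξ • w + mulE A η = 0)
    (h : ∀ S : ℝ, |S| < ε → ∀ Y : EuclideanSpace ℝ (Fin (n - 1)), ‖Y‖ = 1 →
      ξ * S + ⟪η, Y⟫ = 0 →
      S * a + ⟪Y, u⟫ - S ^ 2 * ⟪Y, w⟫ - S * ⟪Y, mulE A Y⟫ = 0 ∧
      (-(S ^ 2 * a)) • Y - (S * (⟪Y, u⟫ + ⟪Y, w⟫)) • Y + S • w + mulE A Y
        + ((S ^ 2 - 1) * ⟪Y, mulE A Y⟫) • Y = 0) :
    a = 0 ∧ u = 0 ∧ w = 0 ∧ A = 0 := by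
  have hm : 2 ≤ n - 1 := by omega
  set r : ℝ := ‖η‖ with hr_def
  have hr : 0 < r := norm_pos_iff.mpr hη
  obtain ⟨e, he_def⟩ : ∃ e' : EuclideanSpace ℝ (Fin (n-1)), e' = r⁻¹ • η := ⟨_, rfl⟩
  have he : ‖e‖ = 1 := by rw [he_def]; exact norm_smul_inv_norm hη
  have hee : ⟪e, e⟫ = 1 := by rw [real_inner_self_eq_norm_mul_norm, he]; ring
  have hηe : η = r • e := by
    rw [he_def, smul_smul, mul_inv_cancel₀ (ne_of_gt hr), one_smul]
  have hinner_e : ∀ x : EuclideanSpace ℝ (Fin (n-1)), ⟪e, x⟫ = r⁻¹ * ⟪η, x⟫ := by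
    intro x; rw [he_def, real_inner_smul_left]
  have hηe' : ⟪η, e⟫ = r := by
    rw [he_def, real_inner_smul_right, real_inner_self_eq_norm_mul_norm, ← hr_def]
    field_simp
  have hz_any : ∀ x : EuclideanSpace ℝ (Fin (n-1)), ⟪η, x - ⟪e, x⟫ • e⟫ = 0 := by
    intro x
    rw [inner_sub_right, real_inner_smul_right, hηe', hinner_e]
    field_simp
    ring
  -- the slope
  set t : ℝ := -r/ξ with ht_def
  have ht : t ≠ 0 := by
    rw [ht_def]
    exact div_ne_zero (neg_ne_zero.mpr (ne_of_gt hr)) hξ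
  have hξt : ξ * t = -r := by rw [ht_def]; field_simp
  -- small parameter
  have htabs : 0 < |t| := abs_pos.mpr ht
  set σ : ℝ := min 1 (ε/|t|) / 2 with hσ_def
  have hσ : 0 < σ := by
    rw [hσ_def]
    have : 0 < min 1 (ε/|t|) := lt_min one_pos (by positivity)
    linarith
  have hσ1 : σ < 1 := by
    rw [hσ_def]
    have : min 1 (ε/|t|) ≤ 1 := min_le_left _ _
    linarith
  have hσε : |t| * σ < ε := by
    have h1 : σ ≤ (ε/|t|)/2 := by
      rw [hσ_def]
      have : min 1 (ε/|t|) ≤ ε/|t| := min_le_right _ _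
      linarith
    have h2 : |t| * σ ≤ |t| * ((ε/|t|)/2) := by
      apply mul_le_mul_of_nonneg_left h1 (le_of_lt htabs)
    have h3 : |t| * ((ε/|t|)/2) = ε/2 := by field_simp
    linarith
  have habs : ∀ s : ℝ, |s| ≤ σ → |t*s| < ε := by
    intro s hs
    rw [abs_mul]
    calc |t| * |s| ≤ |t| * σ := mul_le_mul_of_nonneg_left hs (le_of_lt htabs)
      _ < ε := hσε
  set c : ℝ := Real.sqrt (1 - σ^2) with hc_def
  have hc2 : c^2 = 1 - σ^2 := Real.sq_sqrt (by nlinarith)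
  have hc : 0 < c := Real.sqrt_pos.mpr (by nlinarith)
  set d : ℝ := Real.sqrt (1 - (σ/2)^2) with hd_def
  have hd2 : d^2 = 1 - (σ/2)^2 := Real.sq_sqrt (by nlinarith)
  have hd : 0 < d := Real.sqrt_pos.mpr (by nlinarith)
  -- Te relation
  have hTe : t • mulE A e = w := by
    apply smul_right_injective (EuclideanSpace ℝ (Fin (n-1))) hξ
    have h2 : r • mulE A e = -(ξ • w) := by
      have h3 := hgauge2
      rw [hηe, mulE_smul'] at h3
      linear_combination (norm := module) h3
    show ξ • (t • mulE A e) = ξ • w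
    rw [smul_smul, hξt]
    linear_combination (norm := module) -h2
  -- main per-Y0 derivation
  have main : ∀ Y0 : EuclideanSpace ℝ (Fin (n-1)), ‖Y0‖ = 1 → ⟪η, Y0⟫ = 0 →
      ⟪Y0, w⟫ = 0 ∧ mulE A Y0 = (0:ℝ) • Y0 ∧ ⟪Y0, u⟫ = 0 ∧ a = 0 ∧ ⟪e, u⟫ = 0 ∧ ⟪e, w⟫ = 0 := by
    intro Y0 hY0n hY0o
    have hY0Y0 : ⟪Y0, Y0⟫ = 1 := by rw [real_inner_self_eq_norm_mul_norm, hY0n]; ring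
    have heY0 : ⟪e, Y0⟫ = 0 := by rw [hinner_e, hY0o]; ring
    have hY0e : ⟪Y0, e⟫ = 0 := by rw [real_inner_comm]; exact heY0
    -- S = 0 instantiation
    obtain ⟨q0, p0⟩ := h 0 (by simpa using hε) Y0 hY0n (by rw [hY0o]; ring)
    have hu0 : ⟪Y0, u⟫ = 0 := by simpa using q0
    set lam : ℝ := ⟪Y0, mulE A Y0⟫ with hlam_def
    have hTY0 : mulE A Y0 = lam • Y0 := by
      have p0' : mulE A Y0 - lam • Y0 = 0 := by
        simp only [ne_eq, OfNat.ofNat_ne_zero, not_false_eq_true, zero_pow, zero_mul, neg_zero,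
          zero_smul, zero_sub, smul_zero, zero_add] at p0
        linear_combination (norm := module) p0
      linear_combination (norm := module) p0'
    set ve : ℝ := ⟪e, mulE A e⟫ with hve_def
    set γ0 : ℝ := ⟪Y0, mulE A e⟫ with hγ0_def
    set κ : ℝ := ⟪e, u⟫ with hκ_def
    set we : ℝ := ⟪e, w⟫ with hwe_def
    set w0 : ℝ := ⟪Y0, w⟫ with hw0_def
    have Hve : t * ve = we := by
      rw [hve_def, hwe_def, ← real_inner_smul_right, hTe]
    have Hγ : t * γ0 = w0 := by
      rw [hγ0_def, hw0_def, ← real_inner_smul_right, hTe]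
    have hg1' : ξ * a + r * κ = 0 := by
      rw [hκ_def, hinner_e]
      have : r * (r⁻¹ * ⟪η, u⟫) = ⟪η, u⟫ := by field_simp
      rw [this]
      exact hgauge1
    have hk : t * κ = a := by
      have h1 : ξ * (t*κ - a) = 0 := by linear_combination -hg1' + κ*hξt
      have := cancel₀ hξ h1
      linarith
    -- expansion lemmas
    have E1 : ∀ s cc : ℝ, ⟪s • e + cc • Y0, u⟫ = s * κ := by
      intro s cc
      rw [inner_add_left, real_inner_smul_left, real_inner_smul_left, hu0, ← hκ_def]
      ring
    have E2 : ∀ s cc : ℝ, ⟪s • e + cc • Y0, w⟫ = s * we + cc * w0 := by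
      intro s cc
      rw [inner_add_left, real_inner_smul_left, real_inner_smul_left, ← hwe_def, ← hw0_def]
    have E3 : ∀ s cc : ℝ, mulE A (s • e + cc • Y0) = s • mulE A e + (cc * lam) • Y0 := by
      intro s cc
      rw [mulE_add', mulE_smul', mulE_smul', hTY0, smul_smul]
    have E4 : ∀ s cc : ℝ, ⟪s • e + cc • Y0, mulE A (s • e + cc • Y0)⟫
        = s^2 * ve + s * cc * γ0 + cc^2 * lam := by
      intro s cc
      rw [E3]
      simp only [inner_add_left, inner_add_right, real_inner_smul_left, real_inner_smul_right,
        heY0, hY0Y0]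
      rw [← hve_def, ← hγ0_def]
      ring
    have E5 : ∀ s cc : ℝ, ⟪e, mulE A (s • e + cc • Y0)⟫ = s * ve := by
      intro s cc
      rw [E3, inner_add_right, real_inner_smul_right, real_inner_smul_right, heY0, ← hve_def]
      ring
    have E6 : ∀ s cc : ℝ, ⟪e, s • e + cc • Y0⟫ = s := by
      intro s cc
      rw [inner_add_right, real_inner_smul_right, real_inner_smul_right, hee, heY0]
      ring
    -- instantiation helper facts
    have hcon : ∀ s cc : ℝ, ξ * (t*s) + ⟪η, s • e + cc • Y0⟫ = 0 := by
      intro s cc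
      rw [inner_add_right, real_inner_smul_right, real_inner_smul_right, hηe', hY0o]
      linear_combination s*hξt
    have hnσ : ‖σ • e + c • Y0‖ = 1 := norm_combo he hY0n heY0 σ c (by rw [hc2]; ring)
    have hnσ' : ‖(-σ) • e + c • Y0‖ = 1 := norm_combo he hY0n heY0 (-σ) c (by rw [hc2]; ring)
    have hnτ : ‖(σ/2) • e + d • Y0‖ = 1 := norm_combo he hY0n heY0 (σ/2) d (by rw [hd2]; ring)
    have hnτ' : ‖(-(σ/2)) • e + d • Y0‖ = 1 := norm_combo he hY0n heY0 (-(σ/2)) d (by rw [hd2]; ring)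
    have haσ : |t * σ| < ε := habs σ (by rw [abs_of_pos hσ])
    have haσ' : |t * (-σ)| < ε := habs (-σ) (by rw [abs_neg, abs_of_pos hσ])
    have haτ : |t * (σ/2)| < ε := habs (σ/2) (by rw [abs_of_pos (by linarith)]; linarith)
    have haτ' : |t * (-(σ/2))| < ε := habs (-(σ/2)) (by rw [abs_neg, abs_of_pos (by linarith)]; linarith)
    -- four instantiations
    obtain ⟨q1, p1⟩ := h (t*σ) haσ (σ • e + c • Y0) hnσ (hcon σ c)
    obtain ⟨q2, _⟩ := h (t*(-σ)) haσ' ((-σ) • e + c • Y0) hnσ' (hcon (-σ) c)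
    obtain ⟨q3, p3⟩ := h (t*(σ/2)) haτ ((σ/2) • e + d • Y0) hnτ (hcon (σ/2) d)
    obtain ⟨q4, _⟩ := h (t*(-(σ/2))) haτ' ((-(σ/2)) • e + d • Y0) hnτ' (hcon (-(σ/2)) d)
    rw [E1, E2, E4] at q1 q2 q3 q4
    -- scalar e-component of the vector equations
    have p1e := congrArg (fun v => ⟪e, v⟫) p1
    have p3e := congrArg (fun v => ⟪e, v⟫) p3
    simp only [inner_add_right, inner_sub_right, real_inner_smul_right, inner_zero_right,
      E1, E2, E4, E5, E6, ← hwe_def] at p1e p3e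
    -- arithmetic chain
    have e1 : t*w0 + γ0 = 0 := by
      have G1 : (2*σ^2*c*t)*(t*w0 + γ0) = 0 := by linear_combination -q1 - q2
      exact cancel₀ (mul_ne_zero (by positivity) ht) G1
    have hw0 : w0 = 0 := by
      have G2 : (t^2+1)*w0 = 0 := by linear_combination t*e1 - Hγ
      exact cancel₀ (by positivity) G2
    have hγ0 : γ0 = 0 := by linear_combination e1 - t*hw0
    have KB1 : σ*(t*a + κ - t*lam) + σ^3*(t*lam - t^2*we - t*ve) = 0 := by
      linear_combination (1/2)*q1 - (1/2)*q2 + t*σ*lam*hc2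
    have KB2 : (σ/2)*(t*a + κ - t*lam) + (σ/2)^3*(t*lam - t^2*we - t*ve) = 0 := by
      linear_combination (1/2)*q3 - (1/2)*q4 + t*(σ/2)*lam*hd2
    have hP3 : t*lam - t^2*we - t*ve = 0 := by
      have G3 : (3/4*σ^3)*(t*lam - t^2*we - t*ve) = 0 := by linear_combination KB1 - 2*KB2
      exact cancel₀ (by positivity) G3
    have hP1 : t*a + κ - t*lam = 0 := by
      have G4 : σ*(t*a + κ - t*lam) = 0 := by linear_combination KB1 - σ^3*hP3
      exact cancel₀ (ne_of_gt hσ) G4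
    have hC0 : t*we + ve - lam = 0 := by
      have G5 : t*(t*we + ve - lam) = 0 := by linear_combination -hP3
      exact cancel₀ ht G5
    have M1 : σ*(t*we + ve - lam) + σ^3*(-(t^2)*a - t*κ - t*we + (t^2+1)*lam - ve)
        + σ^5*(t^2*ve - t^2*lam) = 0 := by
      linear_combination p1e - (t^2*σ^2-1)*σ*lam*hc2 + t*σ^2*c*hw0 - (t^2*σ^2-1)*σ^2*c*hγ0
    have M2 : (σ/2)*(t*we + ve - lam) + (σ/2)^3*(-(t^2)*a - t*κ - t*we + (t^2+1)*lam - ve)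
        + (σ/2)^5*(t^2*ve - t^2*lam) = 0 := by
      linear_combination p3e - (t^2*(σ/2)^2-1)*(σ/2)*lam*hd2 + t*(σ/2)^2*d*hw0
        - (t^2*(σ/2)^2-1)*(σ/2)^2*d*hγ0
    have M1' : σ^3*(-(t^2)*a - t*κ - t*we + (t^2+1)*lam - ve) + σ^5*(t^2*ve - t^2*lam) = 0 := by
      linear_combination M1 - σ*hC0
    have M2' : (σ/2)^3*(-(t^2)*a - t*κ - t*we + (t^2+1)*lam - ve)
        + (σ/2)^5*(t^2*ve - t^2*lam) = 0 := by
      linear_combination M2 - (σ/2)*hC0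
    have hC4 : t^2*ve - t^2*lam = 0 := by
      have G6 : (3/4*σ^5)*(t^2*ve - t^2*lam) = 0 := by linear_combination M1' - 8*M2'
      exact cancel₀ (by positivity) G6
    have hve : ve = lam := by
      have G7 : t^2*(ve - lam) = 0 := by linear_combination hC4
      have := cancel₀ (pow_ne_zero 2 ht) G7
      linarith
    have hwe' : we = t*lam := by linear_combination -Hve + t*hve
    have hlam : lam = 0 := by
      have G8 : t^3*lam = 0 := by linear_combination -hP3 - t^2*hwe' - t*hve
      exact cancel₀ (pow_ne_zero 3 ht) G8
    have hκ0 : κ = 0 := by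
      have G9 : (t^2+1)*κ = 0 := by linear_combination hP1 + t*hk + t*hlam
      exact cancel₀ (by positivity) G9
    have ha : a = 0 := by linear_combination -hk + t*hκ0
    have hwe0 : we = 0 := by rw [hwe', hlam, mul_zero]
    refine ⟨hw0, ?_, hu0, ha, hκ0, hwe0⟩
    rw [hTY0, hlam]
  -- assemble
  obtain ⟨Y0, hY0n, hY0o⟩ := exists_unit_orth hm η
  obtain ⟨_, _, _, ha, hκ0, hwe0⟩ := main Y0 hY0n hY0o
  have hu : u = 0 := by
    have hev : ∀ x : EuclideanSpace ℝ (Fin (n-1)), ⟪x, u⟫ = 0 := by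
      intro x
      have h1 : ⟪x - ⟪e, x⟫ • e, u⟫ = 0 :=
        perp_scale (fun Y hY hYo => (main Y hY hYo).2.2.1) _ (hz_any x)
      have h3 : ⟪x, u⟫ = ⟪x - ⟪e, x⟫ • e, u⟫ + ⟪e, x⟫ * ⟪e, u⟫ := by
        rw [inner_sub_left, real_inner_smul_left]; ring
      rw [h3, h1, hκ0]; ring
    exact inner_self_eq_zero.mp (hev u)
  have hw : w = 0 := by
    have hev : ∀ x : EuclideanSpace ℝ (Fin (n-1)), ⟪x, w⟫ = 0 := by
      intro x
      have h1 : ⟪x - ⟪e, x⟫ • e, w⟫ = 0 :=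
        perp_scale (fun Y hY hYo => (main Y hY hYo).1) _ (hz_any x)
      have h3 : ⟪x, w⟫ = ⟪x - ⟪e, x⟫ • e, w⟫ + ⟪e, x⟫ * ⟪e, w⟫ := by
        rw [inner_sub_left, real_inner_smul_left]; ring
      rw [h3, h1, hwe0]; ring
    exact inner_self_eq_zero.mp (hev w)
  have hTe0 : mulE A e = 0 := by
    have h1 : t • mulE A e = 0 := by rw [hTe, hw]
    rcases smul_eq_zero.mp h1 with h' | h'
    · exact absurd h' ht
    · exact h'
  have hTx : ∀ x : EuclideanSpace ℝ (Fin (n-1)), mulE A x = 0 := by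
    intro x
    have h1 : mulE A (x - ⟪e, x⟫ • e) = (0:ℝ) • (x - ⟪e, x⟫ • e) :=
      mulE_scale A (fun Y hY hYo => (main Y hY hYo).2.1) _ (hz_any x)
    calc mulE A x = mulE A (⟪e, x⟫ • e) + mulE A (x - ⟪e, x⟫ • e) := by
          rw [← mulE_add']
          exact congrArg (mulE A) (by module)
      _ = ⟪e, x⟫ • mulE A e + (0:ℝ) • (x - ⟪e, x⟫ • e) := by rw [mulE_smul', h1]
      _ = 0 := by rw [hTe0]; module
  have hA : A = 0 := by
    ext i j
    have h1 := congrFun (congrArg WithLp.ofLp (hTx (EuclideanSpace.single j 1))) i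
    rw [mulE_single'] at h1
    simpa using h1
  exact ⟨ha, hu, hw, hA⟩


theorem stmt_4 (n : ℕ) (hn : 3 ≤ n)
    (ξ : ℝ) (η : EuclideanSpace ℝ (Fin (n - 1)))
    (hξη : ¬(ξ = 0 ∧ η = 0))
    (ε : ℝ) (hε : 0 < ε)
    (a : ℝ) (u w : EuclideanSpace ℝ (Fin (n - 1)))
    (A : Matrix (Fin (n - 1)) (Fin (n - 1)) ℝ)
    (htrace : a + A.trace = 0)
    (hgauge1 : ξ * a + ⟪η, u⟫ = 0)
    (hgauge2 : ξ • w + mulE A η = 0)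
    (h : ∀ S : ℝ, |S| < ε → ∀ Y : EuclideanSpace ℝ (Fin (n - 1)), ‖Y‖ = 1 →
      ξ * S + ⟪η, Y⟫ = 0 →
      S * a + ⟪Y, u⟫ - S ^ 2 * ⟪Y, w⟫ - S * ⟪Y, mulE A Y⟫ = 0 ∧
      (-(S ^ 2 * a)) • Y - (S * (⟪Y, u⟫ + ⟪Y, w⟫)) • Y + S • w + mulE A Y
        + ((S ^ 2 - 1) * ⟪Y, mulE A Y⟫) • Y = 0) :
    a = 0 ∧ u = 0 ∧ w = 0 ∧ A = 0 := by
  rcases eq_or_ne η 0 with hη | hη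
  · have hξ : ξ ≠ 0 := fun h0 => hξη ⟨h0, hη⟩
    subst hη
    exact case_eta_zero n hn ξ hξ ε hε a u w A htrace hgauge1 hgauge2 h
  · rcases eq_or_ne ξ 0 with hξ | hξ
    · subst hξ
      apply case_xi_zero n hn η hη ε hε a u w A htrace
        (by simpa using hgauge1) (by simpa using hgauge2)
      intro S hS Y hY hYo
      exact h S hS Y hY (by rw [hYo]; ring)
    · exact case_both n hn ξ hξ η hη ε hε a u w A hgauge1 hgauge2 h
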